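/- For every r > 0, the derivative at r of the function r ↦ r·u'(r) is strictly negative; explicitly, (1/(4r))·d/dr( r·u'(r) ) = −( α(α−β) + β·r² + (2α−β)·log(1+r²) + (log(1+r²))² ) / ( (1+r²)²·(α + log(1+r²))² ), and the numerator α(α−β) + β·r² + (2α−β)·log(1+r²) + (log(1+r²))² is strictly positive. -/

import Mathlib

open Real

/-- `u(r) = log( (α + log(1+r²))^β / (α^β·(1+r²)) )`. -/
noncomputable def uFJ (α β : ℝ) (r : ℝ) : ℝ :=
  Real.log ((α + Real.log (1 + r ^ 2)) ^ β / (α ^ β * (1 + r ^ 2)))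

theorem stmt_7 (α β : ℝ) (hβ : 0 ≤ β) (hαβ : β < α) (r : ℝ) (hr : 0 < r) :
    (1 / (4 * r)) * deriv (fun t => t * deriv (uFJ α β) t) r
      = -(α * (α - β) + β * r ^ 2 + (2 * α - β) * Real.log (1 + r ^ 2)
            + (Real.log (1 + r ^ 2)) ^ 2)
          / ((1 + r ^ 2) ^ 2 * (α + Real.log (1 + r ^ 2)) ^ 2) ∧
    0 < α * (α - β) + β * r ^ 2 + (2 * α - β) * Real.log (1 + r ^ 2)
          + (Real.log (1 + r ^ 2)) ^ 2 ∧
    deriv (fun t => t * deriv (uFJ α β) t) r < 0 := by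
  have hα : 0 < α := lt_of_le_of_lt hβ hαβ
  have hpos : ∀ t : ℝ, 0 < 1 + t ^ 2 := fun t => by positivity
  have hLnn : ∀ t : ℝ, 0 ≤ Real.log (1 + t ^ 2) := fun t =>
    Real.log_nonneg (by nlinarith [sq_nonneg t])
  have hapos : ∀ t : ℝ, 0 < α + Real.log (1 + t ^ 2) := fun t => by
    have := hLnn t; linarith
  -- rewrite u
  have hu : uFJ α β = fun t => β * Real.log (α + Real.log (1 + t ^ 2))
      - (β * Real.log α + Real.log (1 + t ^ 2)) := by
    funext t
    unfold uFJ
    rw [Real.log_div (ne_of_gt (Real.rpow_pos_of_pos (hapos t) β)) (by positivity),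
      Real.log_rpow (hapos t),
      Real.log_mul (by positivity) (by positivity), Real.log_rpow hα]
  -- derivative of u
  have hderiv : deriv (uFJ α β) = fun t =>
      β * (2 * t / (1 + t ^ 2)) / (α + Real.log (1 + t ^ 2)) - 2 * t / (1 + t ^ 2) := by
    funext t
    rw [hu]
    have h1 : HasDerivAt (fun s : ℝ => 1 + s ^ 2) (2 * t) t := by
      simpa using (hasDerivAt_pow 2 t).const_add 1
    have h2 : HasDerivAt (fun s : ℝ => Real.log (1 + s ^ 2)) (2 * t / (1 + t ^ 2)) t :=
      h1.log (ne_of_gt (hpos t))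
    have ha : HasDerivAt (fun s : ℝ => α + Real.log (1 + s ^ 2)) (2 * t / (1 + t ^ 2)) t :=
      h2.const_add α
    have hlog : HasDerivAt (fun s : ℝ => Real.log (α + Real.log (1 + s ^ 2)))
        ((2 * t / (1 + t ^ 2)) / (α + Real.log (1 + t ^ 2))) t :=
      ha.log (ne_of_gt (hapos t))
    have h3 := (hlog.const_mul β).sub (h2.const_add (β * Real.log α))
    have h4 : HasDerivAt (fun s : ℝ => β * Real.log (α + Real.log (1 + s ^ 2))
        - (β * Real.log α + Real.log (1 + s ^ 2)))
        (β * (2 * t / (1 + t ^ 2)) / (α + Real.log (1 + t ^ 2)) - 2 * t / (1 + t ^ 2)) t := by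
      convert h3 using 1
      all_goals first | rfl | ring
    exact h4.deriv
  -- derivative of f := t * u'
  have h1 : HasDerivAt (fun s : ℝ => 1 + s ^ 2) (2 * r) r := by
    simpa using (hasDerivAt_pow 2 r).const_add 1
  have h2 : HasDerivAt (fun s : ℝ => Real.log (1 + s ^ 2)) (2 * r / (1 + r ^ 2)) r :=
    h1.log (ne_of_gt (hpos r))
  have ha : HasDerivAt (fun s : ℝ => α + Real.log (1 + s ^ 2)) (2 * r / (1 + r ^ 2)) r :=
    h2.const_add α
  set L := Real.log (1 + r ^ 2) with hLdef
  have hq : HasDerivAt (fun s : ℝ => 2 * s / (1 + s ^ 2))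
      ((2 * (1 + r ^ 2) - 2 * r * (2 * r)) / (1 + r ^ 2) ^ 2) r := by
    simpa [Pi.div_def] using ((hasDerivAt_id r).const_mul 2).div h1 (ne_of_gt (hpos r))
  have hb : HasDerivAt
      (fun s : ℝ => β * (2 * s / (1 + s ^ 2)) / (α + Real.log (1 + s ^ 2)))
      ((β * ((2 * (1 + r ^ 2) - 2 * r * (2 * r)) / (1 + r ^ 2) ^ 2) * (α + L)
        - β * (2 * r / (1 + r ^ 2)) * (2 * r / (1 + r ^ 2))) / (α + L) ^ 2) r :=
    (hq.const_mul β).div ha (ne_of_gt (hapos r))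
  have hinner : HasDerivAt (fun s : ℝ =>
      β * (2 * s / (1 + s ^ 2)) / (α + Real.log (1 + s ^ 2)) - 2 * s / (1 + s ^ 2))
      ((β * ((2 * (1 + r ^ 2) - 2 * r * (2 * r)) / (1 + r ^ 2) ^ 2) * (α + L)
        - β * (2 * r / (1 + r ^ 2)) * (2 * r / (1 + r ^ 2))) / (α + L) ^ 2
        - (2 * (1 + r ^ 2) - 2 * r * (2 * r)) / (1 + r ^ 2) ^ 2) r := hb.sub hq
  have hfull : HasDerivAt (fun s : ℝ => s *
      (β * (2 * s / (1 + s ^ 2)) / (α + Real.log (1 + s ^ 2)) - 2 * s / (1 + s ^ 2)))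
      (1 * (β * (2 * r / (1 + r ^ 2)) / (α + L) - 2 * r / (1 + r ^ 2))
        + r * ((β * ((2 * (1 + r ^ 2) - 2 * r * (2 * r)) / (1 + r ^ 2) ^ 2) * (α + L)
          - β * (2 * r / (1 + r ^ 2)) * (2 * r / (1 + r ^ 2))) / (α + L) ^ 2
          - (2 * (1 + r ^ 2) - 2 * r * (2 * r)) / (1 + r ^ 2) ^ 2)) r :=
    (hasDerivAt_id r).mul hinner
  have hfeq : (fun t : ℝ => t * deriv (uFJ α β) t) = fun s : ℝ => s *
      (β * (2 * s / (1 + s ^ 2)) / (α + Real.log (1 + s ^ 2)) - 2 * s / (1 + s ^ 2)) := by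
    funext t; rw [hderiv]
  have hD : deriv (fun t : ℝ => t * deriv (uFJ α β) t) r
      = 1 * (β * (2 * r / (1 + r ^ 2)) / (α + L) - 2 * r / (1 + r ^ 2))
        + r * ((β * ((2 * (1 + r ^ 2) - 2 * r * (2 * r)) / (1 + r ^ 2) ^ 2) * (α + L)
          - β * (2 * r / (1 + r ^ 2)) * (2 * r / (1 + r ^ 2))) / (α + L) ^ 2
          - (2 * (1 + r ^ 2) - 2 * r * (2 * r)) / (1 + r ^ 2) ^ 2) := by
    rw [hfeq]
    exact hfull.deriv
  have hne1 : (1 + r ^ 2) ≠ 0 := ne_of_gt (hpos r)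
  have hne2 : (α + L) ≠ 0 := ne_of_gt (hapos r)
  have hrne : r ≠ 0 := ne_of_gt hr
  have key : (1 / (4 * r)) * deriv (fun t => t * deriv (uFJ α β) t) r
      = -(α * (α - β) + β * r ^ 2 + (2 * α - β) * L + L ^ 2)
          / ((1 + r ^ 2) ^ 2 * (α + L) ^ 2) := by
    rw [hD]
    field_simp
    ring
  have hN : 0 < α * (α - β) + β * r ^ 2 + (2 * α - β) * L + L ^ 2 := by
    have h5 : 0 < α - β := sub_pos.mpr hαβ
    have h6 : 0 ≤ β * r ^ 2 := mul_nonneg hβ (sq_nonneg r)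
    have h7 : 0 ≤ (2 * α - β) * L := mul_nonneg (by linarith) (hLnn r)
    nlinarith [mul_pos hα h5, sq_nonneg L]
  refine ⟨key, hN, ?_⟩
  have hRHS : -(α * (α - β) + β * r ^ 2 + (2 * α - β) * L + L ^ 2)
      / ((1 + r ^ 2) ^ 2 * (α + L) ^ 2) < 0 := by
    apply div_neg_of_neg_of_pos (by linarith) (by positivity)
  have : deriv (fun t => t * deriv (uFJ α β) t) r
      = (4 * r) * (-(α * (α - β) + β * r ^ 2 + (2 * α - β) * L + L ^ 2)
          / ((1 + r ^ 2) ^ 2 * (α + L) ^ 2)) := by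
    rw [← key]; field_simp
  rw [this]
  exact mul_neg_of_pos_of_neg (by positivity) hRHS
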